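/- arXiv:2503.00819 — 4 statements merged into one kernel-verified Lean document; each statement's English description precedes it below -/
import Mathlib

section
/- Let Λ = Z_p[[T]] and let M be a finitely generated Λ-module. Set ω_n(T) = (1+T)^{p^n} − 1. Suppose that for integers n ≥ m ≥ 0 and b ≥ a ≥ 0 we have #(M/ω_m M) ≥ p^a and #(M/ω_n M) ≤ p^b (in particular both quotients are finite). If b − a < n − m, then ω_n M = 0; in particular M is finite. -/
open PowerSeries Pointwise

lemma aux_card (p : ℕ) [Fact p.Prime] (A : Type*) [AddCommGroup A] [Module ℤ_[p] A]
    [Finite A] (hA : Nat.card A ≠ 1) : p ∣ Nat.card A := by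
  obtain ⟨q, hq, hqd⟩ := Nat.exists_prime_and_dvd hA
  haveI : Fact q.Prime := ⟨hq⟩
  obtain ⟨x, hx⟩ := exists_prime_addOrderOf_dvd_card' (G := A) q hqd
  rcases eq_or_ne q p with rfl | hqp
  · exact hqd
  · exfalso
    have hu : IsUnit (q : ℤ_[p]) := by
      rw [PadicInt.isUnit_iff]
      by_contra hn
      have h1 : ‖((q : ℤ) : ℤ_[p])‖ < 1 :=
        lt_of_le_of_ne (PadicInt.norm_le_one _) (by push_cast at hn ⊢; exact hn)
      rw [PadicInt.norm_int_lt_one_iff_dvd] at h1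
      have : p ∣ q := by exact_mod_cast h1
      exact hqp (((Nat.prime_dvd_prime_iff_eq Fact.out hq).mp this).symm)
    have h0 : (q : ℤ_[p]) • x = 0 := by
      rw [Nat.cast_smul_eq_nsmul, ← hx]
      exact addOrderOf_nsmul_eq_zero x
    have hx0 : x = 0 := by
      obtain ⟨u, hu'⟩ := hu
      have := congrArg (fun y => (↑u⁻¹ : ℤ_[p]) • y) h0
      simpa [← hu', smul_smul] using this
    rw [hx0] at hx
    simp at hx
    exact hq.one_lt.ne' hx.symm

lemma aux_quot_card (p : ℕ) [Fact p.Prime] {M : Type*} [AddCommGroup M]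
    [Module (PowerSeries ℤ_[p]) M] (A B : Submodule (PowerSeries ℤ_[p]) M) (hAB : A ≤ B)
    [Finite (M ⧸ A)] (hne : A ≠ B) : p * Nat.card (M ⧸ B) ∣ Nat.card (M ⧸ A) := by
  set B' : Submodule (PowerSeries ℤ_[p]) (M ⧸ A) := B.map A.mkQ with hB'
  have e := Submodule.quotientQuotientEquivQuotient A B hAB
  have hcard : Nat.card (M ⧸ A) = Nat.card (M ⧸ B) * Nat.card B' := by
    have h1 := AddSubgroup.card_eq_card_quotient_mul_card_addSubgroup
      (α := M ⧸ A) B'.toAddSubgroup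
    have h2 : Nat.card ((M ⧸ A) ⧸ B'.toAddSubgroup) = Nat.card (M ⧸ B) := by
      refine Nat.card_congr ?_
      exact (Equiv.refl _).trans e.toEquiv
    rw [h2] at h1
    exact h1
  letI : Module ℤ_[p] ↥B' := Module.compHom _ (PowerSeries.C : ℤ_[p] →+* PowerSeries ℤ_[p])
  have hone : Nat.card ↥B' ≠ 1 := by
    intro h1
    have hsub : Subsingleton ↥B' := (Nat.card_eq_one_iff_unique.mp h1).1
    have : B' = ⊥ := by
      rw [Submodule.eq_bot_iff]
      intro x hx
      exact congrArg Subtype.val (Subsingleton.elim (⟨x, hx⟩ : ↥B') ⟨0, B'.zero_mem⟩)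
    have hBA : B ≤ A := by
      intro x hx
      have hm : A.mkQ x ∈ B' := Submodule.mem_map_of_mem hx
      rw [this, Submodule.mem_bot] at hm
      exact (Submodule.Quotient.mk_eq_zero A).mp hm
    exact hne (le_antisymm hAB hBA)
  have hp : p ∣ Nat.card ↥B' := aux_card p ↥B' hone
  obtain ⟨c, hc⟩ := hp
  exact ⟨c, by rw [hcard, hc]; ring⟩

lemma aux_step (p : ℕ) [Fact p.Prime] (k : ℕ) : ∃ ν : PowerSeries ℤ_[p],
    ((1 + X : PowerSeries ℤ_[p]) ^ (p ^ (k+1)) - 1) = ν * ((1 + X) ^ (p ^ k) - 1) ∧ ¬ IsUnit ν := by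
  refine ⟨∑ i ∈ Finset.range p, ((1 + X : PowerSeries ℤ_[p]) ^ (p ^ k)) ^ i, ?_, ?_⟩
  · have hg := geom_sum_mul ((1 + X : PowerSeries ℤ_[p]) ^ (p ^ k)) p
    rw [← pow_mul, ← pow_succ] at hg
    exact hg.symm
  · rw [PowerSeries.isUnit_iff_constantCoeff]
    have hc : constantCoeff (∑ i ∈ Finset.range p, ((1 + X : PowerSeries ℤ_[p]) ^ (p ^ k)) ^ i)
        = (p : ℤ_[p]) := by
      rw [map_sum]
      have : ∀ i ∈ Finset.range p,
          constantCoeff (((1 + X : PowerSeries ℤ_[p]) ^ (p ^ k)) ^ i) = 1 := by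
        intro i _
        rw [map_pow, map_pow, map_add, constantCoeff_one, constantCoeff_X, add_zero, one_pow,
          one_pow]
      rw [Finset.sum_congr rfl this]
      simp
    rw [hc, PadicInt.isUnit_iff, PadicInt.norm_p]
    have hp1 : (1 : ℝ) < (p : ℝ) := by exact_mod_cast (Fact.out : p.Prime).one_lt
    intro habs
    have hlt : (p : ℝ)⁻¹ < 1 := inv_lt_one_of_one_lt₀ hp1
    rw [habs] at hlt
    exact lt_irrefl _ hlt

/-- Lemma 2.1 of the paper: bounds on two finite quotients force `ω_n M = 0`. -/
theorem iwasawa_finiteness_lemma (p : ℕ) [Fact p.Prime]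
    (ω : ℕ → PowerSeries ℤ_[p])
    (hω : ∀ k, ω k = (1 + X) ^ (p ^ k) - 1)
    (M : Type*) [AddCommGroup M] [Module (PowerSeries ℤ_[p]) M]
    [Module.Finite (PowerSeries ℤ_[p]) M]
    (m n : ℕ) (hmn : m ≤ n) (a b : ℕ) (hab : a ≤ b)
    [Finite (M ⧸ (Ideal.span {ω m} • ⊤ : Submodule (PowerSeries ℤ_[p]) M))]
    [Finite (M ⧸ (Ideal.span {ω n} • ⊤ : Submodule (PowerSeries ℤ_[p]) M))]
    (ha : p ^ a ≤ Nat.card (M ⧸ (Ideal.span {ω m} • ⊤ : Submodule (PowerSeries ℤ_[p]) M)))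
    (hb : Nat.card (M ⧸ (Ideal.span {ω n} • ⊤ : Submodule (PowerSeries ℤ_[p]) M)) ≤ p ^ b)
    (h : b - a < n - m) :
    (Ideal.span {ω n} • ⊤ : Submodule (PowerSeries ℤ_[p]) M) = ⊥ ∧ Finite M := by
  classical
  let N : ℕ → Submodule (PowerSeries ℤ_[p]) M := fun k => Ideal.span {ω k} • ⊤
  have hstep : ∀ j, ∃ ν : PowerSeries ℤ_[p], ω (j+1) = ν * ω j ∧ ¬ IsUnit ν := by
    intro j
    obtain ⟨ν, h1, h2⟩ := aux_step p j
    exact ⟨ν, by rw [hω, hω]; exact h1, h2⟩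
  have hdvd : ∀ k l, k ≤ l → ω k ∣ ω l := by
    intro k l hkl
    induction l, hkl using Nat.le_induction with
    | base => exact dvd_refl _
    | succ j hj ih =>
      obtain ⟨ν, h1, _⟩ := hstep j
      exact h1 ▸ Dvd.dvd.mul_left ih ν
  have hle : ∀ k l, k ≤ l → N l ≤ N k := by
    intro k l hkl
    exact Submodule.smul_mono_left
      (Ideal.span_singleton_le_span_singleton.mpr (hdvd k l hkl))
  haveI hfn : Finite (M ⧸ N n) :=
    inferInstanceAs (Finite (M ⧸ (Ideal.span {ω n} • ⊤ : Submodule (PowerSeries ℤ_[p]) M)))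
  have hfin : ∀ k, k ≤ n → Finite (M ⧸ N k) := by
    intro k hk
    haveI : Finite ((M ⧸ N n) ⧸ (N k).map (N n).mkQ) :=
      Finite.of_surjective _ (Submodule.mkQ_surjective _)
    exact Finite.of_equiv _
      (Submodule.quotientQuotientEquivQuotient (N n) (N k) (hle k n hk)).toEquiv
  have hNak : ∀ k, N k = N (k+1) → N k = ⊥ := by
    intro k hk
    obtain ⟨ν, hν, hνu⟩ := hstep k
    have h1 : N (k+1) = Ideal.span {ν} • N k := by
      show Ideal.span {ω (k+1)} • ⊤ = _
      rw [hν, ← Ideal.span_singleton_mul_span_singleton, Submodule.mul_smul]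
    have hfg : (N k).FG := by
      show (Ideal.span {ω k} • ⊤ : Submodule (PowerSeries ℤ_[p]) M).FG
      rw [Submodule.ideal_span_singleton_smul]
      exact Submodule.FG.map _ (Module.finite_def.mp inferInstance)
    refine Submodule.eq_bot_of_le_smul_of_le_jacobson_bot (Ideal.span {ν}) (N k) hfg ?_ ?_
    · rw [← h1, ← hk]
    · rw [IsLocalRing.jacobson_eq_maximalIdeal (⊥ : Ideal (PowerSeries ℤ_[p])) bot_ne_top,
        Ideal.span_le]
      intro x hx
      rw [Set.mem_singleton_iff] at hx
      subst hx
      exact hνu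
  have hkey : ∃ k, m ≤ k ∧ k < n ∧ N k = N (k+1) := by
    by_contra hc
    push_neg at hc
    have hchain : ∀ j, j ≤ n - m →
        p ^ j * Nat.card (M ⧸ N m) ∣ Nat.card (M ⧸ N (m + j)) := by
      intro j
      induction j with
      | zero => intro _; simp
      | succ j ih =>
        intro hj
        have hj' : j ≤ n - m := by omega
        haveI := hfin (m + j) (by omega)
        haveI := hfin (m + j + 1) (by omega)
        have hne : N (m + j + 1) ≠ N (m + j) :=
          fun hh => hc (m + j) (by omega) (by omega) hh.symm
        have h2 := aux_quot_card p (N (m + j + 1)) (N (m + j))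
          (hle _ _ (Nat.le_succ _)) hne
        have h3 : p ^ (j + 1) * Nat.card (M ⧸ N m) ∣ p * Nat.card (M ⧸ N (m + j)) := by
          rw [pow_succ]
          have := mul_dvd_mul_left p (ih hj')
          calc p ^ j * p * Nat.card (M ⧸ N m)
              = p * (p ^ j * Nat.card (M ⧸ N m)) := by ring
            _ ∣ p * Nat.card (M ⧸ N (m + j)) := this
        exact dvd_trans h3 h2
    have hfinal := hchain (n - m) le_rfl
    rw [Nat.add_sub_cancel' hmn] at hfinal
    have hcn : 0 < Nat.card (M ⧸ N n) := Nat.card_pos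
    have hle2 : p ^ (n - m) * p ^ a ≤ p ^ b := by
      calc p ^ (n - m) * p ^ a ≤ p ^ (n - m) * Nat.card (M ⧸ N m) :=
            Nat.mul_le_mul_left _ ha
        _ ≤ Nat.card (M ⧸ N n) := Nat.le_of_dvd hcn hfinal
        _ ≤ p ^ b := hb
    rw [← pow_add] at hle2
    have := (pow_le_pow_iff_right₀ (Fact.out : p.Prime).one_lt).mp hle2
    omega
  obtain ⟨k, hk1, hk2, hk3⟩ := hkey
  have hbot : N n = ⊥ := by
    have := hle k n hk2.le
    rw [hNak k hk3] at this
    exact le_bot_iff.mp this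
  refine ⟨hbot, ?_⟩
  have hinj : Function.Injective (N n).mkQ := by
    rw [← LinearMap.ker_eq_bot, Submodule.ker_mkQ]
    exact hbot
  exact Finite.of_injective _ hinj
end

section
/- Let Λ = Z_p[[T]] and J an ideal of Λ. The Λ-module Λ/J is finite if and only if there exists n ≥ 0 such that J + (ω_n) = J + (ω_{n+1}), where ω_k(T) = (1+T)^{p^k} − 1. -/
open PowerSeries

/-- `Λ/J` is finite iff the chain of ideals `J + (ω_n)` stabilizes at some level. -/
theorem quotient_finite_iff_stabilizes (p : ℕ) [Fact p.Prime]
    (ω : ℕ → PowerSeries ℤ_[p])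
    (hω : ∀ k, ω k = (1 + X) ^ (p ^ k) - 1)
    (J : Ideal (PowerSeries ℤ_[p]))
    (hfin : ∀ n, Finite (PowerSeries ℤ_[p] ⧸ (J + Ideal.span {ω n}))) :
    Finite (PowerSeries ℤ_[p] ⧸ J) ↔
      ∃ n, J + Ideal.span {ω n} = J + Ideal.span {ω (n + 1)} := by
  -- the quotient ν n = ω (n+1) / ω n
  set ν : ℕ → PowerSeries ℤ_[p] :=
    fun n => ∑ i ∈ Finset.range p, ((1 + X : PowerSeries ℤ_[p]) ^ p ^ n) ^ i with hνdef
  have hfac : ∀ n, ω (n + 1) = ω n * ν n := by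
    intro n
    rw [hω, hω, hνdef, mul_comm]
    have := geom_sum_mul ((1 + X : PowerSeries ℤ_[p]) ^ p ^ n) p
    rw [this, ← pow_mul, ← pow_succ]
  have hνconst : ∀ n, constantCoeff (R := ℤ_[p]) (ν n) = (p : ℤ_[p]) := by
    intro n
    simp [hνdef, map_sum, map_pow]
  constructor
  · -- finite quotient ⇒ chain stabilizes
    intro hJfin
    by_contra hcon
    push_neg at hcon
    set F : ℕ → Ideal (PowerSeries ℤ_[p]) := fun n => J + Ideal.span {ω n} with hF
    have hdvd : ∀ n, ω n ∣ ω (n + 1) := fun n => ⟨ν n, hfac n⟩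
    have hanti : ∀ n, F (n + 1) ≤ F n := by
      intro n
      exact sup_le_sup_left (Ideal.span_singleton_le_span_singleton.mpr (hdvd n)) J
    have hstrict : StrictAnti F :=
      strictAnti_nat_of_succ_lt fun n => lt_of_le_of_ne (hanti n) fun h => hcon n h.symm
    have hJle : ∀ n, J ≤ F n := fun n => le_sup_left
    set G : ℕ → Ideal (PowerSeries ℤ_[p] ⧸ J) :=
      fun n => (F n).map (Ideal.Quotient.mk J) with hG
    have hGinj : Function.Injective G := by
      intro a b hab
      have ha : (G a).comap (Ideal.Quotient.mk J) = F a := by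
        rw [hG, Ideal.comap_map_of_surjective _ Ideal.Quotient.mk_surjective,
          ← RingHom.ker_eq_comap_bot, Ideal.mk_ker, sup_eq_left.mpr (hJle a)]
      have hb : (G b).comap (Ideal.Quotient.mk J) = F b := by
        rw [hG, Ideal.comap_map_of_surjective _ Ideal.Quotient.mk_surjective,
          ← RingHom.ker_eq_comap_bot, Ideal.mk_ker, sup_eq_left.mpr (hJle b)]
      exact hstrict.injective (by rw [← ha, ← hb, hab])
    have : Function.Injective (fun n => ((G n : Set (PowerSeries ℤ_[p] ⧸ J)))) :=
      fun a b hab => hGinj (SetLike.coe_injective hab)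
    obtain ⟨x, y, hxy, hmap⟩ := Finite.exists_ne_map_eq_of_infinite
      (fun n => ((G n : Set (PowerSeries ℤ_[p] ⧸ J))))
    exact hxy (this hmap)
  · -- chain stabilizes ⇒ finite quotient
    rintro ⟨n, hn⟩
    -- ω n ∈ J + (ω (n+1))
    have hmem : ω n ∈ J + Ideal.span {ω (n + 1)} := by
      rw [← hn]
      exact Submodule.mem_sup_right (Ideal.mem_span_singleton_self _)
    rw [Ideal.add_eq_sup, Submodule.mem_sup] at hmem
    obtain ⟨y, hy, z, hz, hyz⟩ := hmem
    obtain ⟨c, hc⟩ := Ideal.mem_span_singleton'.mp hz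
    -- ω n * (1 - c * ν n) = y ∈ J
    have key : ω n * (1 - c * ν n) = y := by
      have : ω n = y + c * ω (n + 1) := by rw [← hc] at hyz; linear_combination -hyz
      rw [hfac] at this
      linear_combination this
    -- 1 - c * ν n is a unit
    have hunit : IsUnit (1 - c * ν n) := by
      rw [PowerSeries.isUnit_iff_constantCoeff]
      have : constantCoeff (R := ℤ_[p]) (1 - c * ν n)
          = 1 - constantCoeff (R := ℤ_[p]) c * p := by
        simp [map_sub, map_mul, hνconst n]
      rw [this]
      refine IsLocalRing.isUnit_one_sub_self_of_mem_nonunits _ fun h => ?_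
      exact PadicInt.p_nonunit (isUnit_of_mul_isUnit_right h)
    have hωJ : ω n ∈ J := by
      obtain ⟨u, hu⟩ := hunit
      have : ω n = y * (↑u⁻¹ : ℤ_[p]⟦X⟧) := by
        rw [← key, ← hu, mul_assoc, Units.mul_inv, mul_one]
      rw [this]
      exact Ideal.mul_mem_right _ _ hy
    have : J + Ideal.span {ω n} = J := by
      rw [Ideal.add_eq_sup, sup_eq_left]
      exact (Ideal.span_singleton_le_iff_mem J).mpr hωJ
    have := hfin n
    rwa [‹J + Ideal.span {ω n} = J›] at this
end

section
/- Let Λ = Z_p[[T]] with ω_n(T) = (1+T)^{p^n} − 1, and let J ⊂ Λ be an ideal. If J + (ω_n) = J + (ω_{n+1}) for some n ≥ 0, then ω_n ∈ J. -/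
open PowerSeries

/-- If `J + (ω_n) = J + (ω_{n+1})` then `ω_n ∈ J`. -/
theorem omega_mem_of_stabilizes (p : ℕ) [Fact p.Prime]
    (ω : ℕ → PowerSeries ℤ_[p])
    (hω : ∀ k, ω k = (1 + X) ^ (p ^ k) - 1)
    (J : Ideal (PowerSeries ℤ_[p])) (n : ℕ)
    (h : J + Ideal.span {ω n} = J + Ideal.span {ω (n + 1)}) :
    ω n ∈ J := by
  set Φ : PowerSeries ℤ_[p] := ∑ i ∈ Finset.range p, ((1 + X) ^ (p ^ n)) ^ i with hΦ
  have hfac : ω (n + 1) = Φ * ω n := by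
    rw [hω, hω, hΦ, geom_sum_mul, pow_succ, pow_mul]
  -- ω n ∈ J + span {ω (n+1)}
  have hmem : ω n ∈ J ⊔ Ideal.span {ω (n + 1)} := by
    rw [← Ideal.add_eq_sup, ← h]
    exact Submodule.mem_sup_right (Ideal.mem_span_singleton_self _)
  obtain ⟨j, hj, z, hz, hjz⟩ := Submodule.mem_sup.mp hmem
  obtain ⟨a, ha⟩ := Ideal.mem_span_singleton'.mp hz
  have key : ω n * (1 - a * Φ) = j := by
    rw [← ha, hfac] at hjz
    linear_combination -hjz
  have hconst : constantCoeff Φ = (p : ℤ_[p]) := by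
    rw [hΦ, map_sum]
    have : ∀ i ∈ Finset.range p,
        constantCoeff (((1 + X : PowerSeries ℤ_[p]) ^ (p ^ n)) ^ i) = 1 := by
      intro i _
      simp
    rw [Finset.sum_congr rfl this]
    simp
  have hunit : IsUnit (1 - a * Φ) := by
    rw [PowerSeries.isUnit_iff_constantCoeff, map_sub, map_one, map_mul, hconst]
    apply IsLocalRing.isUnit_one_sub_self_of_mem_nonunits
    rw [PadicInt.mem_nonunits]
    calc ‖constantCoeff a * (p : ℤ_[p])‖
        ≤ ‖constantCoeff a‖ * ‖(p : ℤ_[p])‖ := norm_mul_le _ _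
      _ ≤ 1 * ‖(p : ℤ_[p])‖ := by gcongr; exact PadicInt.norm_le_one _
      _ < 1 := by
          rw [one_mul, PadicInt.norm_p]
          have hp := (Fact.out : p.Prime).one_lt
          rw [inv_lt_one_iff₀]
          right; exact_mod_cast hp
  obtain ⟨u, hu⟩ := hunit
  have : ω n = j * ↑u⁻¹ := by
    rw [← key, ← hu, mul_assoc, Units.mul_inv, mul_one]
  rw [this]
  exact Ideal.mul_mem_right _ _ hj
end

section
/- Let Λ = Z_3[[T]] and J = (T^2 + 3T − 9, 81). Then ω_4 = (1+T)^{81} − 1 lies in J but ω_3 = (1+T)^{27} − 1 does not, i.e., the level of stabilization of Λ/J is 4. -/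
set_option maxHeartbeats 1000000


open PowerSeries

/-- For `J = (T² + 3T − 9, 81)` in `ℤ_3[[T]]`: `ω_4 ∈ J` but `ω_3 ∉ J`
(level of stabilization 4; discriminant `f = 59061`). -/
theorem exotic_59061 (ω : ℕ → PowerSeries ℤ_[3])
    (hω : ∀ m, ω m = (1 + X) ^ (3 ^ m) - 1) :
    ω 4 ∈ Ideal.span {(X : PowerSeries ℤ_[3]) ^ 2 + 3 * X - 9, 81} ∧
    ω 3 ∉ Ideal.span {(X : PowerSeries ℤ_[3]) ^ 2 + 3 * X - 9, 81} := by
  set J : Ideal (PowerSeries ℤ_[3]) :=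
    Ideal.span {(X : PowerSeries ℤ_[3]) ^ 2 + 3 * X - 9, 81} with hJ
  have hfJ : (X : PowerSeries ℤ_[3]) ^ 2 + 3 * X - 9 ∈ J :=
    Ideal.subset_span (by simp)
  have h81J : (81 : PowerSeries ℤ_[3]) ∈ J :=
    Ideal.subset_span (by simp)
  set π : PowerSeries ℤ_[3] →+* (PowerSeries ℤ_[3] ⧸ J) := Ideal.Quotient.mk J with hπ
  set x : PowerSeries ℤ_[3] ⧸ J := π X with hx
  have hf : x ^ 2 + 3 * x - 9 = 0 := by
    have := (Ideal.Quotient.eq_zero_iff_mem).2 hfJ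
    simpa [map_sub, map_add, map_mul, map_pow, map_ofNat] using this
  have h81 : (81 : PowerSeries ℤ_[3] ⧸ J) = 0 := by
    have := (Ideal.Quotient.eq_zero_iff_mem).2 h81J
    simpa [map_ofNat] using this
  have h1 : (1 + x) ^ 3 = 1 + 12 * x := by linear_combination x * hf
  have h2 : (1 + 12 * x) ^ 3 = 1 + 36 * x := by
    linear_combination (1728 * x - 4752) * hf + (368 * x - 528) * h81
  have h3 : (1 + 36 * x) ^ 3 = 1 + 27 * x := by
    linear_combination (46656 * x - 136080) * hf + (10225 * x - 15120) * h81
  have h4 : (1 + 27 * x) ^ 3 = 1 := by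
    linear_combination (19683 * x - 56862) * hf + (4294 * x - 6318) * h81
  have h27 : (1 + x) ^ 27 = 1 + 27 * x := by
    have e : (1 + x) ^ 27 = (((1 + x) ^ 3) ^ 3) ^ 3 := by
      rw [← pow_mul, ← pow_mul]
    rw [e, h1, h2, h3]
  constructor
  · -- ω 4 ∈ J
    rw [hω, ← Ideal.Quotient.eq_zero_iff_mem]
    have : π ((1 + X) ^ (3 ^ 4) - 1) = (1 + x) ^ 81 - 1 := by
      push_cast [map_sub, map_pow, map_add, map_one]
      norm_num
      rfl
    rw [this]
    have : (1 + x) ^ 81 = 1 := by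
      have e : (1 + x) ^ 81 = ((1 + x) ^ 27) ^ 3 := by rw [← pow_mul]
      rw [e, h27, h4]
    rw [this, sub_self]
  · -- ω 3 ∉ J
    intro hmem
    rw [hω] at hmem
    -- image in the quotient is zero, so 27 * X ∈ J
    have hz : π ((1 + X) ^ (3 ^ 3) - 1) = 0 := Ideal.Quotient.eq_zero_iff_mem.2 hmem
    have h27X : (27 * X : PowerSeries ℤ_[3]) ∈ J := by
      rw [← Ideal.Quotient.eq_zero_iff_mem]
      have hπ27 : π ((1 + X) ^ (3 ^ 3) - 1) = (1 + x) ^ 27 - 1 := by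
        push_cast [map_sub, map_pow, map_add, map_one]
        norm_num
        rfl
      have : (27 * x : PowerSeries ℤ_[3] ⧸ J) = 0 := by
        have := hz
        rw [hπ27, h27] at this
        linear_combination this
      simp only [map_mul, map_ofNat]
      exact this
    -- extract coefficient equations
    rw [hJ, Ideal.mem_span_pair] at h27X
    obtain ⟨A, B, hAB⟩ := h27X
    have key : ∀ n : ℕ, (coeff n) (A * X ^ 2) + 3 * (coeff n) (A * X)
        - 9 * (coeff n) A + 81 * (coeff n) B = 27 * (coeff n) X := by
      intro n
      have h9 : (9 : PowerSeries ℤ_[3]) = C 9 := (map_ofNat (C (R := ℤ_[3])) 9).symm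
      have h3' : (3 : PowerSeries ℤ_[3]) = C 3 := (map_ofNat (C (R := ℤ_[3])) 3).symm
      have h81' : (81 : PowerSeries ℤ_[3]) = C 81 := (map_ofNat (C (R := ℤ_[3])) 81).symm
      have h27' : (27 : PowerSeries ℤ_[3]) = C 27 := (map_ofNat (C (R := ℤ_[3])) 27).symm
      have hAB' : A * X ^ 2 + C 3 * (A * X) - C 9 * A + C 81 * B
          = C 27 * X := by
        rw [← h9, ← h3', ← h81', ← h27']
        linear_combination hAB
      have := congrArg (coeff n) hAB'
      simpa [map_sub, map_add, coeff_C_mul] using this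
    have e0 := key 0
    have e1 := key 1
    have e2 := key 2
    have e3 := key 3
    simp [coeff_X, PowerSeries.coeff_mul_X_pow', PowerSeries.coeff_succ_mul_X,
      PowerSeries.coeff_zero_mul_X, PowerSeries.coeff_zero_eq_constantCoeff] at e0 e1 e2 e3
    set a0 := (constantCoeff) A with ha0
    set a1 := (coeff 1) A with ha1
    set a2 := (coeff 2) A with ha2
    set a3 := (coeff 3) A with ha3
    set b0 := (constantCoeff) B with hb0
    set b1 := (coeff 1) B with hb1
    set b2 := (coeff 2) B with hb2
    set b3 := (coeff 3) B with hb3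
    -- e0 : -9*a0 + 81*b0 = 0 (in some form)
    have h9ne : (9 : ℤ_[3]) ≠ 0 := by norm_num
    have h3ne : (3 : ℤ_[3]) ≠ 0 := by norm_num
    have q0 : a0 = 9 * b0 := by
      apply mul_left_cancel₀ h9ne
      linear_combination -e0
    have q1 : a1 = 3 * (b0 + 3 * b1 - 1) := by
      apply mul_left_cancel₀ h9ne
      linear_combination -e1 + 3 * q0
    have q2 : a2 = 2 * b0 + 3 * b1 - 1 + 9 * b2 := by
      apply mul_left_cancel₀ h9ne
      linear_combination -e2 + 3 * q1 + q0
    have final : (3 : ℤ_[3]) * a3 = 3 * b0 + 6 * b1 + 9 * b2 + 27 * b3 - 2 := by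
      apply mul_left_cancel₀ h3ne
      linear_combination -e3 + 3 * q2 + q1
    have := congrArg (PadicInt.toZMod (p := 3)) final
    simp only [map_mul, map_add, map_sub, map_ofNat] at this
    have h30 : (3 : ZMod 3) = 0 := by decide
    have h2 : (2 : ZMod 3) = 0 := by
      linear_combination this + (PadicInt.toZMod b0 + 2 * PadicInt.toZMod b1
        + 3 * PadicInt.toZMod b2 + 9 * PadicInt.toZMod b3 - PadicInt.toZMod a3) * h30
    exact absurd h2 (by decide)
end
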